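/- Strict convexity of the attractor fibres: for every t ∈ ℝ, the set A t is strictly convex, i.e. StrictConvex ℝ (A t) (for any two distinct points of A t, every proper convex combination of them lies in the interior of A t). -/

import Mathlib

open MeasureTheory Set Metric Pointwise
open scoped RealInnerProductSpace

noncomputable section

abbrev Euc (d : ℕ) : Type := EuclideanSpace ℝ (Fin d)

/-- The set of admissible controls: measurable functions with values in the closed unit ball. -/
def ctrlSet (d : ℕ) : Set (ℝ → Euc d) :=
  {ξ | Measurable ξ ∧ ∀ s, ‖ξ s‖ ≤ 1}

/-- The attractor fibre at time `t`. -/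
def Afib (d : ℕ) (Ψ : ℝ → ℝ → (Euc d →L[ℝ] Euc d)) (ρ t : ℝ) : Set (Euc d) :=
  {x | ∃ ξ ∈ ctrlSet d, x = ρ • ∫ s in Set.Iic t, Ψ t s (ξ s)}

/-- The reachable-set operator of the linear differential inclusion. -/
def reach (d : ℕ) (Ψ : ℝ → ℝ → (Euc d →L[ℝ] Euc d)) (ρ t t₀ : ℝ) (S : Set (Euc d)) :
    Set (Euc d) :=
  {y | ∃ x₀ ∈ S, ∃ ξ ∈ ctrlSet d, y = Ψ t t₀ x₀ + ρ • ∫ s in Set.Icc t₀ t, Ψ t s (ξ s)}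

/-- Integrability of the exponential bound on `Iic t`. -/
lemma exp_integrableOn_Iic (γ t : ℝ) (hγ : 0 < γ) :
    IntegrableOn (fun s => Real.exp (-γ * (t - s))) (Set.Iic t) := by
  have h0 : Integrable ((Set.Iic (γ * t)).indicator Real.exp) volume :=
    (integrable_indicator_iff measurableSet_Iic).2 (integrableOn_exp_Iic (γ * t))
  have h1 : Integrable (fun s => (Set.Iic (γ * t)).indicator Real.exp (γ * s)) volume :=
    h0.comp_mul_left' hγ.ne'
  have h2 : IntegrableOn (fun s => Real.exp (γ * s)) (Set.Iic t) := by
    refine h1.integrableOn.congr_fun (fun s hs => ?_) measurableSet_Iic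
    have hst : γ * s ≤ γ * t := mul_le_mul_of_nonneg_left hs hγ.le
    simp [Set.indicator_of_mem, hst]
  have h3 := h2.const_mul (Real.exp (-γ * t))
  refine IntegrableOn.congr_fun h3 (fun s _ => ?_) measurableSet_Iic
  rw [← Real.exp_add]
  congr 1
  ring

/-- Integrability of `s ↦ Ψ t s (f s)` on `Iic t` for bounded measurable `f`. -/
lemma psi_integrableOn {d : ℕ} (Ψ : ℝ → ℝ → (Euc d →L[ℝ] Euc d))
    (hΨc : Continuous fun p : ℝ × ℝ => Ψ p.1 p.2)
    {K γ : ℝ} (hγ : 0 < γ)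
    (hstab : ∀ s t : ℝ, s ≤ t → ‖Ψ t s‖ ≤ K * Real.exp (-γ * (t - s)))
    (t : ℝ) {f : ℝ → Euc d} (hf : Measurable f) {c : ℝ}
    (hb : ∀ s, ‖f s‖ ≤ c) :
    IntegrableOn (fun s => Ψ t s (f s)) (Set.Iic t) := by
  have h1 : Continuous fun s : ℝ => Ψ t s := hΨc.comp (Continuous.prodMk_right t)
  have hmeas : Measurable fun s => Ψ t s (f s) :=
    isBoundedBilinearMap_apply.continuous.measurable.comp (h1.measurable.prodMk hf)
  have hexp : IntegrableOn (fun s => c * (K * Real.exp (-γ * (t - s)))) (Set.Iic t) :=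
    (exp_integrableOn_Iic γ t hγ).const_mul K |>.const_mul c
  refine Integrable.mono' hexp hmeas.aestronglyMeasurable ?_
  filter_upwards [ae_restrict_mem measurableSet_Iic] with s hs
  calc ‖Ψ t s (f s)‖ ≤ ‖Ψ t s‖ * ‖f s‖ := (Ψ t s).le_opNorm _
    _ ≤ K * Real.exp (-γ * (t - s)) * c := by
        refine mul_le_mul (hstab s t hs) (hb s) (norm_nonneg _) ?_
        exact (norm_nonneg (Ψ t s)).trans (hstab s t hs)
    _ = c * (K * Real.exp (-γ * (t - s))) := by ring

/-- Strict convexity of the attractor fibres. -/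
theorem attractor_strictConvex
    (d : ℕ) (hd : 1 ≤ d)
    (L : ℝ → (Euc d →L[ℝ] Euc d)) (hL : Continuous L)
    (Ψ : ℝ → ℝ → (Euc d →L[ℝ] Euc d))
    (hΨc : Continuous fun p : ℝ × ℝ => Ψ p.1 p.2)
    (hΨid : ∀ t : ℝ, Ψ t t = ContinuousLinearMap.id ℝ (Euc d))
    (hΨcoc : ∀ t s r : ℝ, (Ψ t s).comp (Ψ s r) = Ψ t r)
    (hΨd : ∀ (s : ℝ) (x : Euc d) (t : ℝ), HasDerivAt (fun τ => Ψ τ s x) (L t (Ψ t s x)) t)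
    (K γ : ℝ) (hK : 1 ≤ K) (hγ : 0 < γ)
    (hstab : ∀ s t : ℝ, s ≤ t → ‖Ψ t s‖ ≤ K * Real.exp (-γ * (t - s)))
    (ρ : ℝ) (hρ : 0 < ρ) :
    ∀ t : ℝ, StrictConvex ℝ (Afib d Ψ ρ t) := by
  intro t
  intro x hx y hy hxy a b ha hb hab
  obtain ⟨ξ₁, hξ₁, hxe⟩ := hx
  obtain ⟨ξ₂, hξ₂, hye⟩ := hy
  set ν : Measure ℝ := volume.restrict (Set.Iic t) with hν
  -- the combined control
  set η : ℝ → Euc d := fun s => a • ξ₁ s + b • ξ₂ s with hηdef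
  have hηm : Measurable η := (hξ₁.1.const_smul a).add (hξ₂.1.const_smul b)
  have hηb : ∀ s, ‖η s‖ ≤ 1 := by
    intro s
    calc ‖a • ξ₁ s + b • ξ₂ s‖ ≤ ‖a • ξ₁ s‖ + ‖b • ξ₂ s‖ := norm_add_le _ _
      _ = a * ‖ξ₁ s‖ + b * ‖ξ₂ s‖ := by
          rw [norm_smul, norm_smul, Real.norm_of_nonneg ha.le, Real.norm_of_nonneg hb.le]
      _ ≤ a * 1 + b * 1 := by
          gcongr
          exacts [hξ₁.2 s, hξ₂.2 s]
      _ = 1 := by rw [mul_one, mul_one, hab]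
  -- basic integrability facts
  have hint₁ : IntegrableOn (fun s => Ψ t s (ξ₁ s)) (Set.Iic t) :=
    psi_integrableOn Ψ hΨc hγ hstab t hξ₁.1 hξ₁.2
  have hint₂ : IntegrableOn (fun s => Ψ t s (ξ₂ s)) (Set.Iic t) :=
    psi_integrableOn Ψ hΨc hγ hstab t hξ₂.1 hξ₂.2
  have hintη : IntegrableOn (fun s => Ψ t s (η s)) (Set.Iic t) :=
    psi_integrableOn Ψ hΨc hγ hstab t hηm hηb
  -- the convex combination
  have hIη : (∫ s in Set.Iic t, Ψ t s (η s))
      = a • (∫ s in Set.Iic t, Ψ t s (ξ₁ s)) + b • (∫ s in Set.Iic t, Ψ t s (ξ₂ s)) := by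
    have hfe : (fun s => Ψ t s (η s))
        = fun s => a • Ψ t s (ξ₁ s) + b • Ψ t s (ξ₂ s) := by
      funext s
      simp [hηdef, map_add, _root_.map_smul]
    have h4 : Integrable (fun s => a • Ψ t s (ξ₁ s)) (volume.restrict (Set.Iic t)) :=
      hint₁.smul a
    have h5 : Integrable (fun s => b • Ψ t s (ξ₂ s)) (volume.restrict (Set.Iic t)) :=
      hint₂.smul b
    rw [hfe, integral_add h4 h5, integral_smul, integral_smul]
  have hz : a • x + b • y = ρ • ∫ s in Set.Iic t, Ψ t s (η s) := by
    rw [hxe, hye, hIη, smul_add, smul_comm a ρ, smul_comm b ρ]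
  set z : Euc d := a • x + b • y with hzdef
  -- the controls differ on a set of positive measure
  have hDpos : ν {s | ξ₁ s ≠ ξ₂ s} ≠ 0 := by
    intro h0
    apply hxy
    rw [hxe, hye]
    congr 1
    refine integral_congr_ae ?_
    filter_upwards [ae_iff.2 h0] with s hs
    rw [hs]
  -- a positive-measure set with uniform slack, inside a compact window
  set E : ℕ → Set ℝ := fun n =>
    {s | ‖η s‖ ≤ 1 - 1 / (n + 1)} ∩ Set.Icc (t - n) t with hEdef
  have hEm : ∀ n, MeasurableSet (E n) := fun n =>
    (measurableSet_le hηm.norm measurable_const).inter measurableSet_Icc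
  have hcover : {s | ξ₁ s ≠ ξ₂ s} ⊆ (⋃ n, E n) ∪ (Set.Iic t)ᶜ := by
    intro s hs
    by_cases hst : s ∈ Set.Iic t
    · left
      have hlt : ‖η s‖ < 1 :=
        norm_combo_lt_of_ne (hξ₁.2 s) (hξ₂.2 s) hs ha hb hab
      obtain ⟨n₁, hn₁⟩ := exists_nat_one_div_lt (show (0:ℝ) < 1 - ‖η s‖ by linarith)
      obtain ⟨n₂, hn₂⟩ := exists_nat_ge (t - s)
      refine Set.mem_iUnion.2 ⟨max n₁ n₂, ?_, ?_, hst⟩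
      · have h1 : (1:ℝ) / (max n₁ n₂ + 1) ≤ 1 / (n₁ + 1) := by
          apply one_div_le_one_div_of_le
          · positivity
          · have : (n₁:ℝ) ≤ max n₁ n₂ := Nat.cast_le.2 (le_max_left _ _)
            linarith
        have := hn₁
        simp only [Set.mem_setOf_eq]
        linarith
      · have h2 : (n₂:ℝ) ≤ max n₁ n₂ := Nat.cast_le.2 (le_max_right _ _)
        linarith
    · exact Or.inr hst
  obtain ⟨n, hn⟩ : ∃ n, ν (E n) ≠ 0 := by
    by_contra hcon
    push_neg at hcon
    have h1 : ν (⋃ n, E n) = 0 := measure_iUnion_null hcon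
    have h2 : ν ((Set.Iic t)ᶜ) = 0 := by
      rw [hν, Measure.restrict_apply measurableSet_Iic.compl, Set.compl_Iic,
        Set.Ioi_inter_Iic, Set.Ioc_self, measure_empty]
    exact hDpos (measure_mono_null hcover (measure_union_null h1 h2))
  have hEsub : E n ⊆ Set.Icc (t - n) t := Set.inter_subset_right
  have hEsub' : E n ⊆ Set.Iic t := hEsub.trans Set.Icc_subset_Iic_self
  have hS0 : volume (E n) ≠ 0 := by
    rwa [hν, Measure.restrict_apply (hEm n),
      Set.inter_eq_self_of_subset_left hEsub'] at hn
  have hSfin : volume (E n) < ⊤ :=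
    (measure_mono hEsub).trans_lt measure_Icc_lt_top
  set m : ℝ := (volume (E n)).toReal with hmdef
  have hm : 0 < m := ENNReal.toReal_pos hS0 hSfin.ne
  set ε : ℝ := 1 / (n + 1) with hεdef
  have hε : 0 < ε := by positivity
  -- a bound on ‖Ψ s t‖ on the compact window
  have hcont : Continuous fun s : ℝ => Ψ s t :=
    hΨc.comp (continuous_id.prodMk continuous_const)
  obtain ⟨C, hC⟩ :=
    (isCompact_Icc (a := t - n) (b := t)).exists_bound_of_continuousOn
      hcont.continuousOn
  set C' : ℝ := max C 1 with hC'def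
  have hC'pos : (0:ℝ) < C' := lt_of_lt_of_le one_pos (le_max_right _ _)
  have hC' : ∀ s ∈ Set.Icc (t - (n:ℝ)) t, ‖Ψ s t‖ ≤ C' := fun s hs =>
    (hC s hs).trans (le_max_left _ _)
  -- the radius
  set r : ℝ := ε * ρ * m / C' with hrdef
  have hr : 0 < r := by positivity
  have hρm : (0:ℝ) < ρ * m := by positivity
  -- the ball around z is contained in the fibre
  have hball : ball z r ⊆ Afib d Ψ ρ t := by
    intro u hu
    set w : Euc d := u - z with hwdef
    have hw : ‖w‖ < r := mem_ball_iff_norm.1 hu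
    set w' : Euc d := (ρ * m)⁻¹ • w with hw'def
    set ζ : ℝ → Euc d := fun s => Ψ s t w' with hζdef
    set ξn : ℝ → Euc d := fun s => η s + (E n).indicator ζ s with hξndef
    have hζm : Measurable ζ :=
      (isBoundedBilinearMap_apply.continuous.comp
        (hcont.prodMk continuous_const)).measurable
    have hξnm : Measurable ξn := hηm.add (hζm.indicator (hEm n))
    have hw'norm : ‖w'‖ = (ρ * m)⁻¹ * ‖w‖ := by
      rw [hw'def, norm_smul, Real.norm_of_nonneg (by positivity)]
    -- norm bound on the new control
    have hξnb : ∀ s, ‖ξn s‖ ≤ 1 := by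
      intro s
      by_cases hsS : s ∈ E n
      · have hηs : ‖η s‖ ≤ 1 - ε := hsS.1
        have hζs : ‖ζ s‖ ≤ ε := by
          have h1 : ‖ζ s‖ ≤ C' * ‖w'‖ := by
            calc ‖Ψ s t w'‖ ≤ ‖Ψ s t‖ * ‖w'‖ := (Ψ s t).le_opNorm _
              _ ≤ C' * ‖w'‖ := by
                  gcongr
                  exact hC' s (hEsub hsS)
          have h2 : C' * ‖w'‖ ≤ C' * ((ρ * m)⁻¹ * r) := by
            rw [hw'norm]
            exact mul_le_mul_of_nonneg_left
              (mul_le_mul_of_nonneg_left hw.le (by positivity)) hC'pos.le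
          have h3 : C' * ((ρ * m)⁻¹ * r) = ε := by
            rw [hrdef]
            field_simp
          linarith
        have hxs : ξn s = η s + ζ s := by
          simp only [hξndef]
          rw [Set.indicator_of_mem hsS]
        calc ‖ξn s‖ = ‖η s + ζ s‖ := by rw [hxs]
          _ ≤ ‖η s‖ + ‖ζ s‖ := norm_add_le _ _
          _ ≤ (1 - ε) + ε := add_le_add hηs hζs
          _ = 1 := by ring
      · have hxs : ξn s = η s := by
          simp only [hξndef]
          rw [Set.indicator_of_notMem hsS, add_zero]
        rw [hxs]
        exact hηb s
    -- the value of the new control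
    have hsplit : (fun s => Ψ t s (ξn s))
        = fun s => Ψ t s (η s) + (E n).indicator (fun _ => w') s := by
      funext s
      have h1 : ξn s = η s + (E n).indicator ζ s := rfl
      rw [h1, map_add]
      congr 1
      by_cases hsS : s ∈ E n
      · rw [Set.indicator_of_mem hsS, Set.indicator_of_mem hsS]
        calc Ψ t s (ζ s) = ((Ψ t s).comp (Ψ s t)) w' := rfl
          _ = Ψ t t w' := by rw [hΨcoc]
          _ = w' := by rw [hΨid]; rfl
      · rw [Set.indicator_of_notMem hsS, Set.indicator_of_notMem hsS, map_zero]
    have hindint : IntegrableOn ((E n).indicator (fun _ => w')) (Set.Iic t) := by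
      have h1 : IntegrableOn (fun _ : ℝ => w') (E n) :=
        integrableOn_const hSfin.ne
      exact ((integrable_indicator_iff (hEm n)).2 h1).integrableOn
    have hindval : (∫ s in Set.Iic t, (E n).indicator (fun _ => w') s) = m • w' := by
      rw [setIntegral_indicator (hEm n),
        Set.inter_eq_self_of_subset_right hEsub', setIntegral_const, measureReal_def]
    have hval : ρ • (∫ s in Set.Iic t, Ψ t s (ξn s)) = u := by
      rw [hsplit, integral_add hintη hindint, hindval, smul_add, ← hz,
        smul_smul, smul_smul]
      have h6 : ρ * m * (ρ * m)⁻¹ = 1 := mul_inv_cancel₀ hρm.ne'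
      rw [h6, one_smul, hwdef]
      abel
    exact ⟨ξn, ⟨hξnm, hξnb⟩, hval.symm⟩
  exact mem_interior.2 ⟨ball z r, hball, isOpen_ball, mem_ball_self hr⟩
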